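/- Let D ⊂ ℝⁿ be a domain, f: D → ℝⁿ continuous, and let α: [a,b] → D be a closed curve such that β = f∘α is rectifiable of length c, and f winds α m times around itself, with β⁰: [0,c] → ℝⁿ the normal representation of β and α*: [0,c] → D the f-representation of α with respect to β, h = c/m. Let B₀ ⊂ D and ρ*: D → [0,∞] be Borel with ρ* = 0 on B₀, and define ρ̃(y) = (1/m)·χ_{f(D∖B₀)}(y)·sup_C Σ_{x∈C} ρ*(x), the supremum over all subsets C of f⁻¹(y) ∩ (D∖B₀) with card C ≤ m. Then for a.e. t ∈ (0,h), the points α*(t), α*(t+h), …, α*(t+(m−1)h) are m distinct points of f⁻¹(β⁰(t)), and hence ρ̃(β⁰(t)) ≥ (1/m)·Σ_{j=0}^{m−1} ρ*(α*(t+jh)) whenever β⁰(t) ∉ f(B₀). -/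

import Mathlib

open MeasureTheory ENNReal Set

noncomputable section
open scoped Classical

/-- A closed curve in `ℝⁿ`: a continuous map defined on a compact interval `[a, b]`. -/
structure Curve (n : ℕ) where
  a : ℝ
  b : ℝ
  hab : a ≤ b
  toFun : ℝ → EuclideanSpace ℝ (Fin n)
  cont : ContinuousOn toFun (Set.Icc a b)

namespace Curve

variable {n : ℕ}

/-- The length of a curve, as an extended nonnegative real. -/
def eLength (γ : Curve n) : ℝ≥0∞ := eVariationOn γ.toFun (Set.Icc γ.a γ.b)

/-- A curve is rectifiable if it has finite length. -/
def Rectifiable (γ : Curve n) : Prop := γ.eLength ≠ ⊤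

/-- The (real-valued) length of a curve. -/
def length (γ : Curve n) : ℝ := γ.eLength.toReal

/-- The length function `l_γ(t)`: the length of `γ|_[a,t]`. -/
def lengthFun (γ : Curve n) (t : ℝ) : ℝ := (eVariationOn γ.toFun (Set.Icc γ.a t)).toReal

/-- The normal representation `γ⁰ : [0, l(γ)] → ℝⁿ` of a (rectifiable) curve,
the arclength reparametrization satisfying `γ = γ⁰ ∘ l_γ`. -/
def normalRep (γ : Curve n) (s : ℝ) : EuclideanSpace ℝ (Fin n) :=
  γ.toFun (sInf {t | t ∈ Set.Icc γ.a γ.b ∧ γ.lengthFun t = s})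

/-- A curve lies in a set `D`. -/
def InSet (γ : Curve n) (D : Set (EuclideanSpace ℝ (Fin n))) : Prop :=
  ∀ t ∈ Set.Icc γ.a γ.b, γ.toFun t ∈ D

end Curve

variable {n : ℕ}

/-- The line integral `∫_γ ρ |dx|` of a nonnegative Borel function over a curve,
computed through the normal representation. -/
def lineIntegral (ρ : EuclideanSpace ℝ (Fin n) → ℝ≥0∞) (γ : Curve n) : ℝ≥0∞ :=
  ∫⁻ t in Set.Icc (0 : ℝ) γ.length, ρ (γ.normalRep t)

/-- `ρ` is admissible for the curve family `Γ`: it is Borel and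
`∫_γ ρ |dx| ≥ 1` for every (locally) rectifiable curve of the family. -/
def Admissible (ρ : EuclideanSpace ℝ (Fin n) → ℝ≥0∞) (Γ : Set (Curve n)) : Prop :=
  Measurable ρ ∧ ∀ γ ∈ Γ, γ.Rectifiable → 1 ≤ lineIntegral ρ γ

/-- The `p`-modulus `M_p(Γ)` of a family of curves. -/
def modulus (p : ℝ) (Γ : Set (Curve n)) : ℝ≥0∞ :=
  ⨅ (ρ : EuclideanSpace ℝ (Fin n) → ℝ≥0∞) (_ : Admissible ρ Γ), ∫⁻ x, ρ x ^ p

/-- The image family `f(Γ)`: curves obtained by composing curves of `Γ` with `f`. -/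
def pushforward (f : EuclideanSpace ℝ (Fin n) → EuclideanSpace ℝ (Fin n))
    (Γ : Set (Curve n)) : Set (Curve n) :=
  {β | ∃ γ ∈ Γ, β.a = γ.a ∧ β.b = γ.b ∧ ∀ t ∈ Set.Icc γ.a γ.b, β.toFun t = f (γ.toFun t)}

/-- `l(A) = inf_{|h| = 1} |A h|`. -/
def minNorm (A : EuclideanSpace ℝ (Fin n) →L[ℝ] EuclideanSpace ℝ (Fin n)) : ℝ :=
  sInf ((fun h => ‖A h‖) '' {h | ‖h‖ = 1})

/-- The inner dilatation of order `p` of a linear map `A`: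
`|det A| / l(A)^p` if `det A ≠ 0`, `1` if `A = 0`, and `∞` otherwise. -/
def innerDilatation (p : ℝ)
    (A : EuclideanSpace ℝ (Fin n) →L[ℝ] EuclideanSpace ℝ (Fin n)) : ℝ≥0∞ :=
  if A.det ≠ 0 then ENNReal.ofReal (|A.det| / minNorm A ^ p)
  else if A = 0 then 1 else ⊤

/-- `K_{I,p}(x, f)`, the inner dilatation of order `p` of `f` at `x`. -/
def KIp (p : ℝ) (f : EuclideanSpace ℝ (Fin n) → EuclideanSpace ℝ (Fin n))
    (x : EuclideanSpace ℝ (Fin n)) : ℝ≥0∞ :=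
  innerDilatation p (fderiv ℝ f x)

/-- Luzin's `N`-property on `D`. -/
def NProp (f : EuclideanSpace ℝ (Fin n) → EuclideanSpace ℝ (Fin n))
    (D : Set (EuclideanSpace ℝ (Fin n))) : Prop :=
  ∀ S ⊆ D, volume S = 0 → volume (f '' S) = 0

/-- The `N⁻¹`-property on `D`. -/
def NInvProp (f : EuclideanSpace ℝ (Fin n) → EuclideanSpace ℝ (Fin n))
    (D : Set (EuclideanSpace ℝ (Fin n))) : Prop :=
  ∀ S : Set (EuclideanSpace ℝ (Fin n)), volume S = 0 → volume (D ∩ f ⁻¹' S) = 0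

/-- `f` is discrete on `D`: each fiber consists of isolated points. -/
def DiscreteMap (f : EuclideanSpace ℝ (Fin n) → EuclideanSpace ℝ (Fin n))
    (D : Set (EuclideanSpace ℝ (Fin n))) : Prop :=
  ∀ y, ∀ x ∈ D, f x = y → ∃ ε > 0, ∀ z ∈ Metric.ball x ε ∩ D, f z = y → z = x

/-- Absolute continuity of `g` on `[a, b]`. -/
def AbsContOn (g : ℝ → EuclideanSpace ℝ (Fin n)) (a b : ℝ) : Prop :=
  ∀ ε > 0, ∃ δ > 0, ∀ (k : ℕ) (u v : ℕ → ℝ),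
    (∀ i < k, a ≤ u i ∧ u i ≤ v i ∧ v i ≤ b) →
    (∀ i < k, ∀ j < k, i ≠ j → Disjoint (Set.Ioo (u i) (v i)) (Set.Ioo (u j) (v j))) →
    (∑ i ∈ Finset.range k, (v i - u i)) < δ →
    (∑ i ∈ Finset.range k, ‖g (v i) - g (u i)‖) < ε

/-- The `ACP_p⁻¹` property: for `p`-a.e. closed curve `β` in `f(D)`, every lifting `γ` of `β`
in `D` is rectifiable and its `f`-representation is absolutely continuous. -/
def ACPinv (p : ℝ) (f : EuclideanSpace ℝ (Fin n) → EuclideanSpace ℝ (Fin n))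
    (D : Set (EuclideanSpace ℝ (Fin n))) : Prop :=
  modulus p {β : Curve n | β.InSet (f '' D) ∧
    ¬ ∀ γ : Curve n, γ.a = β.a → γ.b = β.b → γ.InSet D →
        (∀ t ∈ Set.Icc γ.a γ.b, f (γ.toFun t) = β.toFun t) →
        γ.Rectifiable ∧ ∃ αs : ℝ → EuclideanSpace ℝ (Fin n),
          (∀ t ∈ Set.Icc γ.a γ.b, γ.toFun t = αs (β.lengthFun t)) ∧
          AbsContOn αs 0 β.length} = 0

/-- `f` winds the closed curve `α` `m` times around itself. -/
def Winds (f : EuclideanSpace ℝ (Fin n) → EuclideanSpace ℝ (Fin n)) (m : ℕ)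
    (α : Curve n) : Prop :=
  ∃ β : Curve n, β.a = α.a ∧ β.b = α.b ∧
    (∀ t ∈ Set.Icc α.a α.b, β.toFun t = f (α.toFun t)) ∧ β.Rectifiable ∧
    ∃ αs : ℝ → EuclideanSpace ℝ (Fin n),
      (∀ t ∈ Set.Icc α.a α.b, α.toFun t = αs (β.lengthFun t)) ∧
      ∀ (t : ℝ) (j : ℕ), 0 ≤ t → 1 ≤ j → j ≤ m - 1 →
        t + j * (β.length / m) < β.length →
        β.normalRep (t + j * (β.length / m)) = β.normalRep t ∧
        αs (t + j * (β.length / m)) ≠ αs t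

/-- `f` is bi-Lipschitz on the set `S`. -/
def BiLipschitzOn (f : EuclideanSpace ℝ (Fin n) → EuclideanSpace ℝ (Fin n))
    (S : Set (EuclideanSpace ℝ (Fin n))) : Prop :=
  ∃ M M' : ℝ, 0 < M' ∧
    (∀ x ∈ S, ∀ y ∈ S, dist (f x) (f y) ≤ M * dist x y) ∧
    (∀ x ∈ S, ∀ y ∈ S, M' * dist x y ≤ dist (f x) (f y))

/-- Encoding of `f ∈ W^{1,n}_loc(D)`: `f` is differentiable a.e. in `D` and its derivative is
locally `n`-integrable on `D` (Mathlib does not yet have Sobolev spaces). -/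
def MemW1nLoc (n' : ℕ) (f : EuclideanSpace ℝ (Fin n) → EuclideanSpace ℝ (Fin n))
    (D : Set (EuclideanSpace ℝ (Fin n))) : Prop :=
  (∀ᵐ x ∂(volume.restrict D), DifferentiableAt ℝ f x) ∧
  LocallyIntegrableOn (fun x => ‖fderiv ℝ f x‖ ^ n') D volume

/-- `f` is a mapping with bounded distortion (constant `K`) on the domain `D`. -/
def BoundedDistortion (K : ℝ) (f : EuclideanSpace ℝ (Fin n) → EuclideanSpace ℝ (Fin n))
    (D : Set (EuclideanSpace ℝ (Fin n))) : Prop :=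
  ContinuousOn f D ∧ MemW1nLoc n f D ∧
  ((∀ᵐ x ∂(volume.restrict D), 0 ≤ (fderiv ℝ f x).det) ∨
   (∀ᵐ x ∂(volume.restrict D), (fderiv ℝ f x).det ≤ 0)) ∧
  (∀ᵐ x ∂(volume.restrict D), ‖fderiv ℝ f x‖ ^ n ≤ K * |(fderiv ℝ f x).det|)

end

/-- **Distinct preimages along a wound curve and the key estimate (formula (4)).** Let `f` be
continuous on the domain `D`, `α` a closed curve in `D` with `β = f ∘ α` rectifiable of length
`c`, wound `m` times by `f`, with normal representation `β⁰` and `f`-representation `α*`,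
`h = c/m`. Let `ρ* : D → [0, ∞]` be Borel vanishing on `B₀ ⊆ D`, and
`ρ̃(y) = (1/m) · χ_{f(D∖B₀)}(y) · sup_C Σ_{x ∈ C} ρ*(x)` over `C ⊆ f⁻¹(y) ∩ (D∖B₀)`,
`card C ≤ m`. Then for a.e. `t ∈ (0, h)` the points `α*(t), α*(t+h), …, α*(t+(m−1)h)` are `m`
distinct points of `f⁻¹(β⁰(t))`, and hence
`ρ̃(β⁰(t)) ≥ (1/m) Σ_{j=0}^{m−1} ρ*(α*(t+jh))` whenever `β⁰(t) ∉ f(B₀)`. -/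
theorem distinct_preimages_and_sup_estimate
    {n : ℕ} (D : Set (EuclideanSpace ℝ (Fin n)))
    (hDopen : IsOpen D) (hDconn : IsConnected D)
    (f : EuclideanSpace ℝ (Fin n) → EuclideanSpace ℝ (Fin n)) (hf : ContinuousOn f D)
    (α : Curve n) (hαD : α.InSet D) (m : ℕ) (hm : 0 < m)
    (β : Curve n) (hba : β.a = α.a) (hbb : β.b = α.b)
    (hβf : ∀ t ∈ Set.Icc α.a α.b, β.toFun t = f (α.toFun t)) (hrect : β.Rectifiable)
    (αs : ℝ → EuclideanSpace ℝ (Fin n))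
    (hrep : ∀ t ∈ Set.Icc α.a α.b, α.toFun t = αs (β.lengthFun t))
    (hαsD : ∀ t ∈ Set.Icc (0 : ℝ) β.length, αs t ∈ D)
    (hαsf : ∀ t ∈ Set.Icc (0 : ℝ) β.length, f (αs t) = β.normalRep t)
    (hwind : ∀ (t : ℝ) (j : ℕ), 0 ≤ t → 1 ≤ j → j ≤ m - 1 →
      t + j * (β.length / m) < β.length →
      β.normalRep (t + j * (β.length / m)) = β.normalRep t ∧
      αs (t + j * (β.length / m)) ≠ αs t)
    (B₀ : Set (EuclideanSpace ℝ (Fin n))) (hB₀ : B₀ ⊆ D)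
    (ρstar : EuclideanSpace ℝ (Fin n) → ℝ≥0∞) (hρmeas : Measurable ρstar)
    (hvan : ∀ x ∈ B₀, ρstar x = 0)
    (ρt : EuclideanSpace ℝ (Fin n) → ℝ≥0∞)
    (hρt : ∀ y, ρt y = (m : ℝ≥0∞)⁻¹ *
      Set.indicator (f '' (D \ B₀))
        (fun y' => ⨆ (C : Finset (EuclideanSpace ℝ (Fin n)))
          (_ : ∀ x ∈ C, x ∈ D \ B₀ ∧ f x = y') (_ : C.card ≤ m), ∑ x ∈ C, ρstar x) y) :
    ∀ᵐ t ∂(volume.restrict (Set.Ioo (0 : ℝ) (β.length / m))),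
      (∀ j < m, f (αs (t + j * (β.length / m))) = β.normalRep t) ∧
      (∀ i < m, ∀ j < m, i ≠ j →
        αs (t + i * (β.length / m)) ≠ αs (t + j * (β.length / m))) ∧
      (β.normalRep t ∉ f '' B₀ →
        (m : ℝ≥0∞)⁻¹ * ∑ j ∈ Finset.range m, ρstar (αs (t + j * (β.length / m))) ≤
          ρt (β.normalRep t)) := by
  classical
  filter_upwards [ae_restrict_mem measurableSet_Ioo] with t ht
  obtain ⟨ht0, hth⟩ := ht
  set c := β.length with hc
  set h := c / m with hh
  have hm' : (0:ℝ) < m := Nat.cast_pos.mpr hm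
  have hh0 : 0 < h := ht0.trans hth
  have hmh : (m:ℝ) * h = c := by rw [hh]; field_simp
  have hc0 : 0 < c := by nlinarith
  have hlt : ∀ j < m, t + j * h < c := by
    intro j hj
    have hj' : (j:ℝ) + 1 ≤ m := by exact_mod_cast hj
    nlinarith
  have hmem : ∀ j < m, t + j * h ∈ Set.Icc (0:ℝ) c := by
    intro j hj
    refine ⟨by positivity, (hlt j hj).le⟩
  have key1 : ∀ j < m, β.normalRep (t + j * h) = β.normalRep t := by
    intro j hj
    rcases Nat.eq_zero_or_pos j with h0 | h1
    · simp [h0]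
    · exact (hwind t j ht0.le h1 (Nat.le_sub_one_of_lt hj) (hlt j hj)).1
  have part1 : ∀ j < m, f (αs (t + j * h)) = β.normalRep t := by
    intro j hj
    rw [hαsf _ (hmem j hj), key1 j hj]
  have main : ∀ i j : ℕ, i < j → j < m → αs (t + j * h) ≠ αs (t + i * h) := by
    intro i j hij hjm
    have hij' : i ≤ j := hij.le
    have hcast : ((j - i : ℕ) : ℝ) = (j:ℝ) - i := by
      push_cast [Nat.cast_sub hij'] ; ring
    have heq : (t + i * h) + (j - i : ℕ) * h = t + j * h := by
      rw [hcast]; ring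
    have h1 : 1 ≤ j - i := by omega
    have h2 : j - i ≤ m - 1 := by omega
    have h0 : (0:ℝ) ≤ t + i * h := by positivity
    have := (hwind (t + i * h) (j - i) h0 h1 h2 (by rw [heq]; exact hlt j hjm)).2
    rwa [heq] at this
  have part2 : ∀ i < m, ∀ j < m, i ≠ j →
      αs (t + i * h) ≠ αs (t + j * h) := by
    intro i hi j hj hne
    rcases lt_or_gt_of_ne hne with h' | h'
    · exact (main i j h' hj).symm
    · exact main j i h' hi
  refine ⟨part1, part2, ?_⟩
  intro hnot
  have hDB : ∀ j < m, αs (t + j * h) ∈ D \ B₀ := by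
    intro j hj
    refine ⟨hαsD _ (hmem j hj), fun hB => hnot ⟨_, hB, part1 j hj⟩⟩
  set g : ℕ → EuclideanSpace ℝ (Fin n) := fun j => αs (t + j * h) with hg
  have hinj : Set.InjOn g (Finset.range m) := by
    intro i hi j hj hij
    by_contra hne
    exact part2 i (Finset.mem_range.mp hi) j (Finset.mem_range.mp hj) hne hij
  set C : Finset (EuclideanSpace ℝ (Fin n)) := (Finset.range m).image g with hC
  have hsum : ∑ x ∈ C, ρstar x = ∑ j ∈ Finset.range m, ρstar (g j) :=
    Finset.sum_image fun i hi j hj hij => hinj hi hj hij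
  have hCmem : ∀ x ∈ C, x ∈ D \ B₀ ∧ f x = β.normalRep t := by
    intro x hx
    obtain ⟨j, hj, rfl⟩ := Finset.mem_image.mp hx
    exact ⟨hDB j (Finset.mem_range.mp hj), part1 j (Finset.mem_range.mp hj)⟩
  have hCcard : C.card ≤ m := le_trans Finset.card_image_le (by simp)
  have himg : β.normalRep t ∈ f '' (D \ B₀) :=
    ⟨g 0, hDB 0 hm, part1 0 hm⟩
  rw [hρt, Set.indicator_of_mem himg]
  refine mul_le_mul_right ?_ _
  rw [← hsum]
  exact le_iSup_of_le C (by rw [iSup_pos hCmem, iSup_pos hCcard])
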